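/- Fix c > 0 and n ≥ 1. For x = (x₁,0,…,0) with x₁ > 0 and y = (y₁,y') ∈ R × R^{n-1}, define K₄(t,x,y) = (t/y₁)·(log(x₁/y₁))^{-3/2}·exp(-c t²/log(x₁/y₁))·exp(-c|y'|²) for 1 < y₁ < x₁/2, and K₄ = 0 otherwise. Then ∫_{R^n} K₄(t,x,y) dy ≤ C·min{1, t} for all t > 0 and all such x, with C depending only on n and c. -/

import Mathlib

open Real MeasureTheory

lemma aux_key (x : ℝ) (hx : 0 ≤ x) : (1+x)^3 ≤ 4 * Real.exp (2*x) := by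
  have h := Real.sum_le_exp_of_nonneg (by linarith : (0:ℝ) ≤ 2*x) 4
  norm_num [Finset.sum_range_succ, Nat.factorial] at h
  nlinarith [h, hx, sq_nonneg x, mul_nonneg (mul_nonneg hx hx) hx]

lemma aux_exp3 (L z : ℝ) (hL : 0 < L) (hz : 0 < z) :
    Real.exp (-(2*(z/L))) * (L+z)^3 ≤ 4 * L^3 := by
  have h := aux_key (z/L) (by positivity)
  have h2 : (L+z)^3 ≤ 4*L^3 * Real.exp (2*(z/L)) := by
    have h3 : (L+z)^3 = L^3 * (1+z/L)^3 := by field_simp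
    nlinarith [pow_pos hL 3, Real.exp_pos (2*(z/L))]
  rw [Real.exp_neg]
  rw [mul_comm, ← div_eq_mul_inv, div_le_iff₀ (Real.exp_pos _)]
  linarith

lemma aux_main (L z : ℝ) (hL : 0 < L) (hz : 0 < z) :
    L ^ (-(3:ℝ)/2) * Real.exp (-(z/L)) ≤ 2 * (L + z) ^ (-(3:ℝ)/2) := by
  have hLz : 0 < L + z := by linarith
  set E := Real.exp (-(z/L)) with hE
  set P := L ^ ((3:ℝ)/2) with hP
  set Q := (L+z) ^ ((3:ℝ)/2) with hQ
  have hEpos : 0 < E := Real.exp_pos _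
  have hPpos : 0 < P := Real.rpow_pos_of_pos hL _
  have hQpos : 0 < Q := Real.rpow_pos_of_pos hLz _
  have hP2 : P^2 = L^3 := by
    rw [hP, ← Real.rpow_natCast (L ^ ((3:ℝ)/2)) 2, ← Real.rpow_mul hL.le,
      show ((3:ℝ)/2*(2:ℕ)) = ((3:ℕ):ℝ) by norm_num, Real.rpow_natCast]
  have hQ2 : Q^2 = (L+z)^3 := by
    rw [hQ, ← Real.rpow_natCast ((L+z) ^ ((3:ℝ)/2)) 2, ← Real.rpow_mul hLz.le,
      show ((3:ℝ)/2*(2:ℕ)) = ((3:ℕ):ℝ) by norm_num, Real.rpow_natCast]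
  have hnegP : L ^ (-(3:ℝ)/2) = P⁻¹ := by
    rw [hP, ← Real.rpow_neg hL.le]; norm_num
  have hnegQ : (L+z) ^ (-(3:ℝ)/2) = Q⁻¹ := by
    rw [hQ, ← Real.rpow_neg hLz.le]; norm_num
  rw [hnegP, hnegQ]
  have hE2 : E^2 = Real.exp (-(2*(z/L))) := by
    rw [hE, sq, ← Real.exp_add]; ring_nf
  have hsq : (E * Q)^2 ≤ (2*P)^2 := by
    calc (E*Q)^2 = E^2 * Q^2 := by ring
    _ = Real.exp (-(2*(z/L))) * (L+z)^3 := by rw [hE2, hQ2]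
    _ ≤ 4 * L^3 := aux_exp3 L z hL hz
    _ = (2*P)^2 := by rw [mul_pow, hP2]; norm_num
  have hEQ : E * Q ≤ 2 * P := by
    have := Real.sqrt_le_sqrt hsq
    rwa [Real.sqrt_sq (by positivity), Real.sqrt_sq (by positivity)] at this
  have h1 : P⁻¹ * E = (E*Q)/(P*Q) := by field_simp
  have h2 : 2 * Q⁻¹ = (2*P)/(P*Q) := by field_simp
  rw [h1, h2]
  gcongr

lemma oneD (c : ℝ) (hc : 0 < c) (x₁ t : ℝ) (hx₁ : 0 < x₁) (ht : 0 < t) :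
    (∫ a : ℝ, if 1 < a ∧ a < x₁/2 then (t/a) * (Real.log (x₁/a)) ^ (-(3:ℝ)/2)
      * Real.exp (-c * t^2 / Real.log (x₁/a)) else 0)
    ≤ (4 * ((Real.log 2) ^ (-(1:ℝ)/2) + c ^ (-(1:ℝ)/2))) * min 1 t := by
  have hlog2 : 0 < Real.log 2 := Real.log_pos (by norm_num)
  have hmin : 0 < min 1 t := lt_min one_pos ht
  have hKnn : (0:ℝ) ≤ 4 * ((Real.log 2) ^ (-(1:ℝ)/2) + c ^ (-(1:ℝ)/2)) := by positivity
  by_cases hx : 1 < x₁/2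
  swap
  · have hz : ∀ a : ℝ, (if 1 < a ∧ a < x₁/2 then (t/a) * (Real.log (x₁/a)) ^ (-(3:ℝ)/2)
        * Real.exp (-c * t^2 / Real.log (x₁/a)) else 0) = 0 := by
      intro a
      rw [if_neg]; rintro ⟨h1, h2⟩; exact hx (by linarith)
    simp only [hz, integral_zero]
    positivity
  have hx2 : 2 < x₁ := by linarith
  have hzpos : 0 < c * t^2 := by positivity
  set z := c * t^2 with hzdef
  set h : ℝ → ℝ := fun a => 2*t/a * (Real.log x₁ - Real.log a + z) ^ (-(3:ℝ)/2) with hhdef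
  have hupos : ∀ a ∈ Set.Icc (1:ℝ) (x₁/2), 0 < Real.log x₁ - Real.log a + z := by
    intro a ha
    have h1 : Real.log a ≤ Real.log (x₁/2) := Real.log_le_log (by linarith [ha.1]) ha.2
    rw [Real.log_div (by linarith) (by norm_num)] at h1
    linarith
  have hcont : ContinuousOn h (Set.Icc 1 (x₁/2)) := by
    have c1 : ContinuousOn (fun a : ℝ => 2*t/a) (Set.Icc 1 (x₁/2)) := by
      apply continuousOn_const.div continuousOn_id
      intro a ha
      have h1 : (1:ℝ) ≤ a := ha.1
      simp only [id_eq]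
      exact ne_of_gt (by linarith)
    have c2 : ContinuousOn (fun a : ℝ => Real.log x₁ - Real.log a + z) (Set.Icc 1 (x₁/2)) := by
      apply ContinuousOn.add ?_ continuousOn_const
      apply continuousOn_const.sub
      apply Real.continuousOn_log.mono
      intro a ha
      have h1 : (1:ℝ) ≤ a := ha.1
      simp only [Set.mem_compl_iff, Set.mem_singleton_iff]
      exact ne_of_gt (by linarith)
    exact c1.mul (c2.rpow_const (fun a ha => Or.inl (ne_of_gt (hupos a ha))))
  have hIntIoo : IntegrableOn h (Set.Ioo 1 (x₁/2)) :=
    (hcont.integrableOn_Icc).mono_set Set.Ioo_subset_Icc_self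
  have hIndInt : Integrable ((Set.Ioo (1:ℝ) (x₁/2)).indicator h) :=
    hIntIoo.integrable_indicator measurableSet_Ioo
  have step1 : (∫ a : ℝ, if 1 < a ∧ a < x₁/2 then (t/a) * (Real.log (x₁/a)) ^ (-(3:ℝ)/2)
      * Real.exp (-c * t^2 / Real.log (x₁/a)) else 0)
      ≤ ∫ a : ℝ, (Set.Ioo (1:ℝ) (x₁/2)).indicator h a := by
    apply integral_mono_of_nonneg (Filter.Eventually.of_forall ?_) hIndInt
      (Filter.Eventually.of_forall ?_)
    · intro a
      simp only [Pi.zero_apply]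
      by_cases hmem : 1 < a ∧ a < x₁/2
      · rw [if_pos hmem]
        have ha0 : (0:ℝ) < a := by linarith [hmem.1]
        have hLnn : 0 ≤ Real.log (x₁/a) :=
          Real.log_nonneg ((one_le_div ha0).mpr (by linarith [hmem.2]))
        have := Real.exp_pos (-c * t^2 / Real.log (x₁/a))
        have := Real.rpow_nonneg hLnn (-(3:ℝ)/2)
        positivity
      · rw [if_neg hmem]
    · intro a
      by_cases hmem : 1 < a ∧ a < x₁/2
      · rw [if_pos hmem, Set.indicator_of_mem (Set.mem_Ioo.mpr hmem)]
        have ha0 : (0:ℝ) < a := by linarith [hmem.1]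
        have hLeq : Real.log (x₁/a) = Real.log x₁ - Real.log a :=
          Real.log_div (by linarith) (ne_of_gt ha0)
        have hLpos : 0 < Real.log (x₁/a) := Real.log_pos ((one_lt_div ha0).mpr (by linarith [hmem.2, hmem.1]))
        have harg : -c * t^2 / Real.log (x₁/a) = -(z / Real.log (x₁/a)) := by
          rw [hzdef]; ring
        have hmain := aux_main (Real.log (x₁/a)) z hLpos hzpos
        have hta : 0 ≤ t/a := by positivity
        calc (t/a) * (Real.log (x₁/a)) ^ (-(3:ℝ)/2) * Real.exp (-c * t^2 / Real.log (x₁/a))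
            = (t/a) * ((Real.log (x₁/a)) ^ (-(3:ℝ)/2) * Real.exp (-(z / Real.log (x₁/a)))) := by
              rw [harg]; ring
          _ ≤ (t/a) * (2 * (Real.log (x₁/a) + z) ^ (-(3:ℝ)/2)) :=
              mul_le_mul_of_nonneg_left hmain hta
          _ = h a := by rw [hhdef]; simp only; rw [hLeq]; ring
      · rw [if_neg hmem, Set.indicator_of_notMem (by rwa [Set.mem_Ioo])]
  have step2 : (∫ a : ℝ, (Set.Ioo (1:ℝ) (x₁/2)).indicator h a)
      = 4*t*(Real.log 2 + z) ^ (-(1:ℝ)/2) - 4*t*(Real.log x₁ + z) ^ (-(1:ℝ)/2) := by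
    rw [integral_indicator measurableSet_Ioo, ← integral_Ioc_eq_integral_Ioo,
      ← intervalIntegral.integral_of_le hx.le]
    have hderiv : ∀ a ∈ Set.uIcc (1:ℝ) (x₁/2),
        HasDerivAt (fun a => 4*t*(Real.log x₁ - Real.log a + z) ^ (-(1:ℝ)/2)) (h a) a := by
      intro a ha
      rw [Set.uIcc_of_le hx.le] at ha
      have ha0 : (0:ℝ) < a := by linarith [ha.1]
      have hu : HasDerivAt (fun a : ℝ => Real.log x₁ - Real.log a + z) (-a⁻¹) a := by
        simpa using ((Real.hasDerivAt_log (ne_of_gt ha0)).const_sub (Real.log x₁)).add_const z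
      have h2 := (hu.rpow_const (p := -(1:ℝ)/2) (Or.inl (ne_of_gt (hupos a ha)))).const_mul (4*t)
      refine h2.congr_deriv ?_
      symm
      rw [hhdef]
      simp only
      rw [show (-(1:ℝ)/2 - 1) = (-(3:ℝ)/2) by norm_num]
      field_simp
      ring
    have hii : IntervalIntegrable h volume 1 (x₁/2) :=
      (hcont.mono (by rw [Set.uIcc_of_le hx.le])).intervalIntegrable
    rw [intervalIntegral.integral_eq_sub_of_hasDerivAt hderiv hii]
    rw [Real.log_div (by linarith) (by norm_num), Real.log_one]
    ring_nf
  have hlx : 0 < Real.log x₁ := Real.log_pos (by linarith)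
  have hsub : 0 ≤ 4*t*(Real.log x₁ + z) ^ (-(1:ℝ)/2) := by
    have := Real.rpow_nonneg (show (0:ℝ) ≤ Real.log x₁ + z by linarith) (-(1:ℝ)/2)
    positivity
  rw [step2] at step1
  refine step1.trans ?_
  have hb : 4*t*(Real.log 2 + z) ^ (-(1:ℝ)/2) - 4*t*(Real.log x₁ + z) ^ (-(1:ℝ)/2)
      ≤ 4*t*(Real.log 2 + z) ^ (-(1:ℝ)/2) := by linarith
  refine hb.trans ?_
  rcases le_total t 1 with hts | hts
  · rw [min_eq_right hts]
    have m1 : (Real.log 2 + z) ^ (-(1:ℝ)/2) ≤ (Real.log 2) ^ (-(1:ℝ)/2) :=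
      Real.rpow_le_rpow_of_nonpos hlog2 (by nlinarith) (by norm_num)
    have m2 : 0 ≤ c ^ (-(1:ℝ)/2) := Real.rpow_nonneg hc.le _
    have m3 := mul_le_mul_of_nonneg_left m1 (show (0:ℝ) ≤ 4*t by positivity)
    nlinarith [mul_nonneg m2 ht.le]
  · rw [min_eq_left hts]
    have m1 : (Real.log 2 + z) ^ (-(1:ℝ)/2) ≤ (c*t^2) ^ (-(1:ℝ)/2) :=
      Real.rpow_le_rpow_of_nonpos hzpos (by simp only [hzdef]; nlinarith) (by norm_num)
    have m2 : (c*t^2 : ℝ) ^ (-(1:ℝ)/2) = c ^ (-(1:ℝ)/2) * t⁻¹ := by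
      rw [Real.mul_rpow hc.le (sq_nonneg t)]
      congr 1
      rw [← Real.rpow_natCast t 2, ← Real.rpow_mul ht.le,
        show ((2:ℕ):ℝ) * (-(1:ℝ)/2) = -1 by norm_num, Real.rpow_neg_one]
    calc 4*t*(Real.log 2 + z) ^ (-(1:ℝ)/2) ≤ 4*t*(c ^ (-(1:ℝ)/2) * t⁻¹) := by
          rw [← m2]; exact mul_le_mul_of_nonneg_left m1 (by positivity)
      _ = 4 * c ^ (-(1:ℝ)/2) := by field_simp
      _ ≤ 4 * ((Real.log 2) ^ (-(1:ℝ)/2) + c ^ (-(1:ℝ)/2)) * 1 := by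
          nlinarith [Real.rpow_nonneg hlog2.le (-(1:ℝ)/2)]

/-- with `n = m + 1 ≥ 1` and `y = (y₁, y') ∈ ℝ × ℝ^{n-1}`. -/
theorem stmt_6 (m : ℕ) (c : ℝ) (hc : 0 < c) :
    ∃ C > 0, ∀ x₁ : ℝ, 0 < x₁ → ∀ t : ℝ, 0 < t →
      ∫ y : ℝ × EuclideanSpace ℝ (Fin m),
          (if 1 < y.1 ∧ y.1 < x₁ / 2 then
            (t / y.1) * (Real.log (x₁ / y.1)) ^ (-(3 : ℝ) / 2)
              * Real.exp (-c * t ^ 2 / Real.log (x₁ / y.1))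
              * Real.exp (-c * ‖y.2‖ ^ 2)
          else 0)
        ≤ C * min 1 t := by
  have hlog2 : 0 < Real.log 2 := Real.log_pos (by norm_num)
  set K : ℝ := 4 * ((Real.log 2) ^ (-(1:ℝ)/2) + c ^ (-(1:ℝ)/2)) with hK
  have hKpos : 0 < K := by positivity
  set G : ℝ := ∫ b : EuclideanSpace ℝ (Fin m), Real.exp (-c * ‖b‖ ^ 2) with hG
  have hG0 : 0 ≤ G := integral_nonneg (fun b => (Real.exp_pos _).le)
  refine ⟨K * G + 1, by positivity, ?_⟩
  intro x₁ hx₁ t ht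
  have hmin : 0 < min 1 t := lt_min one_pos ht
  set f₁ : ℝ → ℝ := fun a => if 1 < a ∧ a < x₁/2 then (t/a) * (Real.log (x₁/a)) ^ (-(3:ℝ)/2)
      * Real.exp (-c * t^2 / Real.log (x₁/a)) else 0 with hf₁
  have hfact : (∫ y : ℝ × EuclideanSpace ℝ (Fin m),
      (if 1 < y.1 ∧ y.1 < x₁ / 2 then
        (t / y.1) * (Real.log (x₁ / y.1)) ^ (-(3 : ℝ) / 2)
          * Real.exp (-c * t ^ 2 / Real.log (x₁ / y.1))
          * Real.exp (-c * ‖y.2‖ ^ 2)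
      else 0)) = (∫ a : ℝ, f₁ a) * G := by
    rw [hG, ← MeasureTheory.integral_prod_mul (f := f₁)
      (g := fun b : EuclideanSpace ℝ (Fin m) => Real.exp (-c * ‖b‖ ^ 2)), ← MeasureTheory.Measure.volume_eq_prod]
    apply integral_congr_ae
    filter_upwards with y
    by_cases hy : 1 < y.1 ∧ y.1 < x₁/2
    · rw [if_pos hy, hf₁]
      simp only [if_pos hy]
    · rw [if_neg hy, hf₁]
      simp only [if_neg hy, zero_mul]
  rw [hfact]
  have hJ : (∫ a : ℝ, f₁ a) ≤ K * min 1 t := oneD c hc x₁ t hx₁ ht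
  calc (∫ a : ℝ, f₁ a) * G ≤ (K * min 1 t) * G := mul_le_mul_of_nonneg_right hJ hG0
    _ = (K * G) * min 1 t := by ring
    _ ≤ (K * G + 1) * min 1 t := by nlinarith
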